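/- Let X be a Banach lattice. Every element x of the positive cone X₊, viewed as an element of the bidual X'' acting on X', is an order continuous positive functional on X': if A ⊆ X' is upwards directed and has a supremum sup A in X', then ⟨sup A, x⟩ = sup_{x' ∈ A} ⟨x', x⟩. Moreover X, viewed inside X'', separates the points of X'. -/

import Mathlib

open Set

/-- The canonical order on the dual of a Banach lattice: `f ≤ g` iff `f x ≤ g x` for every
positive `x`. -/
def dualLE {X : Type*} [NormedAddCommGroup X] [Lattice X] [HasSolidNorm X]
    [IsOrderedAddMonoid X] [NormedSpace ℝ X]
    (f g : X →L[ℝ] ℝ) : Prop := ∀ x : X, 0 ≤ x → f x ≤ g x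

/-- every positive `x ∈ X₊`, regarded as a functional on `X'`, is order
continuous: it maps the supremum of a nonempty upwards directed set in `X'` to the supremum
of the values. Moreover `X` separates the points of `X'`. -/
theorem positive_elements_order_continuous {X : Type*} [NormedAddCommGroup X] [Lattice X] [HasSolidNorm X]
    [IsOrderedAddMonoid X]
    [NormedSpace ℝ X] [CompleteSpace X] :
    (∀ x : X, 0 ≤ x → ∀ A : Set (X →L[ℝ] ℝ), A.Nonempty → DirectedOn dualLE A →
      ∀ s : X →L[ℝ] ℝ,
        ((∀ f ∈ A, dualLE f s) ∧ ∀ b, (∀ f ∈ A, dualLE f b) → dualLE s b) →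
        s x = sSup ((fun f : X →L[ℝ] ℝ => f x) '' A)) ∧
    (∀ f g : X →L[ℝ] ℝ, f ≠ g → ∃ x : X, f x ≠ g x) := by
  constructor
  · rintro x hx A ⟨f₀, hf₀⟩ hdir s ⟨hub, hlub⟩
    -- the pointwise sup function
    set S : X → ℝ := fun y => sSup ((fun f : X →L[ℝ] ℝ => f y) '' A) with hS
    have hne : ∀ y : X, ((fun f : X →L[ℝ] ℝ => f y) '' A).Nonempty :=
      fun y => ⟨f₀ y, ⟨f₀, hf₀, rfl⟩⟩
    have hbdd : ∀ y : X, 0 ≤ y → BddAbove ((fun f : X →L[ℝ] ℝ => f y) '' A) := by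
      rintro y hy
      exact ⟨s y, by rintro a ⟨f, hf, rfl⟩; exact hub f hf y hy⟩
    have hle : ∀ f ∈ A, ∀ y : X, 0 ≤ y → f y ≤ S y := by
      intro f hf y hy
      exact le_csSup (hbdd y hy) ⟨f, hf, rfl⟩
    have hSle : ∀ y : X, 0 ≤ y → S y ≤ s y := by
      intro y hy
      exact csSup_le (hne y) (by rintro a ⟨f, hf, rfl⟩; exact hub f hf y hy)
    -- additivity on the cone
    have hadd : ∀ u v : X, 0 ≤ u → 0 ≤ v → S (u + v) = S u + S v := by
      intro u v hu hv
      have huv : (0:X) ≤ u + v := add_nonneg hu hv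
      apply le_antisymm
      · apply csSup_le (hne _)
        rintro a ⟨f, hf, rfl⟩
        calc f (u + v) = f u + f v := by rw [map_add]
        _ ≤ S u + S v := add_le_add (hle f hf u hu) (hle f hf v hv)
      · have key : ∀ f ∈ A, f u ≤ S (u + v) - S v := by
          intro f hf
          have h2 : S v ≤ S (u + v) - f u := by
            apply csSup_le (hne v)
            rintro a ⟨g, hg, rfl⟩
            obtain ⟨h, hh, hfh, hgh⟩ := hdir f hf g hg
            have : f u + g v ≤ h (u + v) := by
              rw [map_add]; exact add_le_add (hfh u hu) (hgh v hv)
            linarith [this.trans (hle h hh (u + v) huv)]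
          linarith
        have : S u ≤ S (u + v) - S v := by
          apply csSup_le (hne u)
          rintro a ⟨f, hf, rfl⟩
          exact key f hf
        linarith
    have hS0 : S 0 = 0 := by
      have : ((fun f : X →L[ℝ] ℝ => f (0:X)) '' A) = {0} := by
        apply Subset.antisymm
        · rintro a ⟨f, hf, rfl⟩; simp
        · rintro a rfl; exact ⟨f₀, hf₀, by simp⟩
      show sSup ((fun f : X →L[ℝ] ℝ => f (0:X)) '' A) = 0
      rw [this, csSup_singleton]
    -- the extension g
    set g : X → ℝ := fun y => S y⁺ - S y⁻ with hg
    have hgpos : ∀ y : X, 0 ≤ y → g y = S y := by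
      intro y hy
      rw [hg]
      simp only [posPart_eq_self.2 hy, negPart_eq_zero.2 hy, hS0, sub_zero]
    have hgadd : ∀ y z : X, g (y + z) = g y + g z := by
      intro y z
      have key : (y + z)⁺ + (y⁻ + z⁻) = (y + z)⁻ + (y⁺ + z⁺) := by
        have h1 : (y + z)⁺ - (y + z)⁻ = y + z := posPart_sub_negPart _
        have h2 : y⁺ - y⁻ = y := posPart_sub_negPart _
        have h3 : z⁺ - z⁻ = z := posPart_sub_negPart _
        have e : (y + z)⁺ + (y⁻ + z⁻) - ((y + z)⁻ + (y⁺ + z⁺))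
            = ((y + z)⁺ - (y + z)⁻) - ((y⁺ - y⁻) + (z⁺ - z⁻)) := by abel
        rw [h1, h2, h3] at e
        have e2 : (y + z)⁺ + (y⁻ + z⁻) - ((y + z)⁻ + (y⁺ + z⁺)) = 0 := by
          rw [e]; abel
        exact sub_eq_zero.mp e2
      have e1 : S ((y + z)⁺ + (y⁻ + z⁻)) = S (y+z)⁺ + (S y⁻ + S z⁻) := by
        rw [hadd _ _ (posPart_nonneg _) (add_nonneg (negPart_nonneg _) (negPart_nonneg _)),
          hadd _ _ (negPart_nonneg _) (negPart_nonneg _)]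
      have e2 : S ((y + z)⁻ + (y⁺ + z⁺)) = S (y+z)⁻ + (S y⁺ + S z⁺) := by
        rw [hadd _ _ (negPart_nonneg _) (add_nonneg (posPart_nonneg _) (posPart_nonneg _)),
          hadd _ _ (posPart_nonneg _) (posPart_nonneg _)]
      have := e1.symm.trans (by rw [key, e2])
      rw [hg]
      dsimp only
      linarith
    -- boundedness / Lipschitz
    set C : ℝ := ‖f₀‖ + ‖s‖ with hC
    have hCbound : ∀ y : X, 0 ≤ y → |g y| ≤ C * ‖y‖ := by
      intro y hy
      rw [hgpos y hy, hC]
      have h1 : f₀ y ≤ S y := hle f₀ hf₀ y hy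
      have h2 : S y ≤ s y := hSle y hy
      have h3 : |f₀ y| ≤ ‖f₀‖ * ‖y‖ := f₀.le_opNorm y
      have h4 : |s y| ≤ ‖s‖ * ‖y‖ := s.le_opNorm y
      have h5 : (0:ℝ) ≤ ‖f₀‖ * ‖y‖ := by positivity
      have h6 : (0:ℝ) ≤ ‖s‖ * ‖y‖ := by positivity
      rw [abs_le] at h3 h4 ⊢
      constructor <;> nlinarith [h3.1, h3.2, h4.1, h4.2]
    have hbound : ∀ y : X, |g y| ≤ 2 * C * ‖y‖ := by
      intro y
      have habs : y⁺ + y⁻ = |y| := posPart_add_negPart y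
      have hp : ‖y⁺‖ ≤ ‖y‖ := by
        apply HasSolidNorm.solid
        rw [abs_of_nonneg (posPart_nonneg y)]
        calc y⁺ ≤ y⁺ + y⁻ := le_add_of_nonneg_right (negPart_nonneg y)
        _ = |y| := habs
      have hn : ‖y⁻‖ ≤ ‖y‖ := by
        apply HasSolidNorm.solid
        rw [abs_of_nonneg (negPart_nonneg y)]
        calc y⁻ ≤ y⁺ + y⁻ := le_add_of_nonneg_left (posPart_nonneg y)
        _ = |y| := habs
      have hgy : g y = g y⁺ - g y⁻ := by
        have := hgadd y⁻ y
        have hsplit : y⁻ + y = y⁺ := by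
          have h := sub_eq_iff_eq_add.mp (posPart_sub_negPart y)
          rw [add_comm]; exact h.symm
        rw [hsplit] at this
        linarith
      have h1 := hCbound y⁺ (posPart_nonneg y)
      have h2 := hCbound y⁻ (negPart_nonneg y)
      have hC0 : 0 ≤ C := by rw [hC]; positivity
      rw [hgy]
      rw [abs_le] at h1 h2 ⊢
      constructor <;> nlinarith [mul_le_mul_of_nonneg_left hp hC0,
        mul_le_mul_of_nonneg_left hn hC0]
    -- g is additive and Lipschitz, hence a continuous linear map
    have hg0 : g 0 = 0 := by
      have := hgadd 0 0
      simp only [add_zero] at this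
      linarith
    have hgsub : ∀ y z : X, g (y - z) = g y - g z := by
      intro y z
      have := hgadd z (y - z)
      rw [add_sub_cancel] at this
      linarith
    have hlip : LipschitzWith (Real.toNNReal (2 * C)) g := by
      apply LipschitzWith.of_dist_le_mul
      intro y z
      rw [Real.dist_eq, dist_eq_norm, ← hgsub]
      refine le_trans (hbound (y - z)) ?_
      gcongr
      exact Real.le_coe_toNNReal _
    set G : X →+ ℝ := AddMonoidHom.mk' g hgadd with hG
    set b : X →L[ℝ] ℝ := AddMonoidHom.toRealLinearMap G hlip.continuous with hb
    have hbval : ∀ y : X, b y = g y := fun y => rfl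
    have hubb : ∀ f ∈ A, dualLE f b := by
      intro f hf y hy
      rw [hbval, hgpos y hy]
      exact hle f hf y hy
    have hsb : dualLE s b := hlub b hubb
    apply le_antisymm
    · have := hsb x hx
      rw [hbval, hgpos x hx] at this
      exact this
    · exact hSle x hx
  · intro f g hfg
    by_contra h
    push_neg at h
    exact hfg (ContinuousLinearMap.ext h)
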